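/- Let B = B'(p) be a base-polyhedron defined by a real-valued supermodular function p, and let m ∈ B have distinct component values λ'₁ > λ'₂ > ⋯ > λ'_ℓ. Then m is the unique decreasingly minimal element of B if and only if each level set Ĉ_i := {s ∈ S : m(s) ≥ λ'_i} is m-tight, i.e., Σ_{s∈Ĉ_i} m(s) = p(Ĉ_i), for i = 1, …, ℓ. -/

import Mathlib

open Finset

variable {α : Type*} [Fintype α] [DecidableEq α]

def Supermodular (p : Finset α → EReal) : Prop :=
  ∀ X Y : Finset α, p X + p Y ≤ p (X ∩ Y) + p (X ∪ Y)

/-- `p` takes values in `ℤ ∪ {−∞}`. -/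
def IntegerValued (p : Finset α → EReal) : Prop :=
  ∀ X : Finset α, p X = ⊥ ∨ ∃ n : ℤ, p X = ((n : ℝ) : EReal)

/-- `x` belongs to the base-polyhedron `B'(p)`:
`x(S) = p(S)` and `x(Z) ≥ p(Z)` for every `Z ⊆ S`. -/
def memB (p : Finset α → EReal) (x : α → ℝ) : Prop :=
  ((∑ s, x s : ℝ) : EReal) = p Finset.univ ∧
    ∀ Z : Finset α, p Z ≤ ((∑ s ∈ Z, x s : ℝ) : EReal)

/-- `x` is an integral element of the base-polyhedron `B'(p)` (a member of the
M-convex set `B ∩ ℤ^S`). -/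
def memBZ (p : Finset α → EReal) (x : α → ℤ) : Prop :=
  ((((∑ s, x s : ℤ) : ℝ)) : EReal) = p Finset.univ ∧
    ∀ Z : Finset α, p Z ≤ ((((∑ s ∈ Z, x s : ℤ) : ℝ)) : EReal)

/-- Lexicographic comparison `l1 ≤_lex l2` of lists. -/
def lexLE {β : Type*} [LT β] (l1 l2 : List β) : Prop :=
  l1 = l2 ∨ List.Lex (· < ·) l1 l2

/-- The components of `x` sorted in decreasing order. -/
noncomputable def sortDescR (x : α → ℝ) : List ℝ :=
  (Multiset.sort (Finset.univ.val.map x) (· ≤ ·)).reverse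

/-- The components of the integral vector `x` sorted in decreasing order. -/
def sortDescZ (x : α → ℤ) : List ℤ :=
  (Multiset.sort (Finset.univ.val.map x) (· ≤ ·)).reverse

/-- `m` is a decreasingly minimal element of the base-polyhedron `B'(p)`. -/
def DecMinR (p : Finset α → EReal) (m : α → ℝ) : Prop :=
  memB p m ∧ ∀ y : α → ℝ, memB p y → lexLE (sortDescR m) (sortDescR y)

/-- `m` is a decreasingly minimal element of the M-convex set `B'(p) ∩ ℤ^S`. -/
def DecMinZ (p : Finset α → EReal) (m : α → ℤ) : Prop :=
  memBZ p m ∧ ∀ y : α → ℤ, memBZ p y → lexLE (sortDescZ m) (sortDescZ y)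

namespace DMAux
open List


theorem sum_le_card_mul {u : List ℝ} {c : ℝ} (h : ∀ x ∈ u, x ≤ c) : u.sum ≤ u.length * c := by
  induction u with
  | nil => simp
  | cons a t ih =>
    have h1 := ih (fun x hx => h x (mem_cons_of_mem _ hx))
    have h2 := h a (List.mem_cons_self)
    have h3 : ((t.length + 1 : ℕ) : ℝ) * c = (t.length : ℝ) * c + c := by push_cast; ring
    simp only [List.sum_cons, List.length_cons, h3]
    linarith

theorem card_mul_le_sum {u : List ℝ} {c : ℝ} (h : ∀ x ∈ u, c ≤ x) : u.length * c ≤ u.sum := by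
  induction u with
  | nil => simp
  | cons a t ih =>
    have h1 := ih (fun x hx => h x (mem_cons_of_mem _ hx))
    have h2 := h a (List.mem_cons_self)
    have h3 : ((t.length + 1 : ℕ) : ℝ) * c = (t.length : ℝ) * c + c := by push_cast; ring
    simp only [List.sum_cons, List.length_cons, h3]
    linarith

theorem filter_le_eq_takeWhile (v : ℝ) :
    ∀ (l : List ℝ), l.Pairwise (· ≥ ·) →
      l.filter (fun x => decide (v ≤ x)) = l.takeWhile (fun x => decide (v ≤ x)) := by
  intro l
  induction l with
  | nil => simp
  | cons a t ih =>
    intro hs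
    rw [List.pairwise_cons] at hs
    by_cases hva : v ≤ a
    · rw [List.filter_cons_of_pos (by simpa using hva), List.takeWhile_cons_of_pos (by simpa using hva),
        ih hs.2]
    · rw [List.filter_cons_of_neg (by simpa using hva), List.takeWhile_cons_of_neg (by simpa using hva)]
      rw [List.filter_eq_nil_iff]
      intro x hx
      simp only [decide_eq_true_eq]
      intro hvx
      exact hva (le_trans hvx (hs.1 x hx))

theorem take_countP_eq_filter {l : List ℝ} (hl : l.Pairwise (· ≥ ·)) (v : ℝ) :
    l.take (l.countP (fun x => decide (v ≤ x))) = l.filter (fun x => decide (v ≤ x)) := by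
  rw [List.countP_eq_length_filter, filter_le_eq_takeWhile v l hl]
  exact (List.prefix_iff_eq_take.mp (List.takeWhile_prefix _)).symm

theorem sorted_decomp (w : ℝ) :
    ∀ (l : List ℝ), l.Pairwise (· ≥ ·) →
      l = l.filter (fun x => decide (w < x)) ++ l.filter (fun x => decide (x = w))
          ++ l.filter (fun x => decide (x < w)) := by
  intro l
  induction l with
  | nil => simp
  | cons a t ih =>
    intro hs
    rw [List.pairwise_cons] at hs
    have ht := ih hs.2
    rcases lt_trichotomy w a with h | h | h
    · rw [List.filter_cons_of_pos (by simpa using h),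
        List.filter_cons_of_neg (by simp; rintro rfl; exact absurd h (lt_irrefl _)),
        List.filter_cons_of_neg (by simp; exact le_of_lt h)]
      simpa using congrArg (a :: ·) ht
    · subst h
      have h1 : t.filter (fun x => decide (w < x)) = [] := by
        rw [List.filter_eq_nil_iff]; intro x hx
        simp only [decide_eq_true_eq, not_lt]
        exact hs.1 x hx
      rw [List.filter_cons_of_neg (by simp), List.filter_cons_of_pos (by simp), h1]
      rw [h1] at ht
      simpa using congrArg (w :: ·) ht
    · have h1 : t.filter (fun x => decide (w < x)) = [] := by
        rw [List.filter_eq_nil_iff]; intro x hx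
        simp only [decide_eq_true_eq, not_lt]
        exact le_of_lt (lt_of_le_of_lt (hs.1 x hx) h)
      have h2 : t.filter (fun x => decide (x = w)) = [] := by
        rw [List.filter_eq_nil_iff]; intro x hx
        simp only [decide_eq_true_eq]
        rintro rfl
        exact absurd (hs.1 x hx) (not_le.mpr h)
      rw [List.filter_cons_of_neg (by simp; exact le_of_lt h),
        List.filter_cons_of_neg (by simp; rintro rfl; exact absurd h (lt_irrefl _)),
        List.filter_cons_of_pos (by simpa using h), h1, h2]
      rw [h1, h2] at ht
      simpa using congrArg (a :: ·) ht

theorem sum_le_sum_take :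
    ∀ (l : List ℝ), l.Pairwise (· ≥ ·) → ∀ (t : Multiset ℝ), t ≤ ↑l →
      t.sum ≤ (l.take (Multiset.card t)).sum := by
  intro l
  induction l with
  | nil =>
    intro _ t ht
    have : t = 0 := Multiset.le_zero.mp (by simpa using ht)
    simp [this]
  | cons a u ih =>
    intro hs t ht
    rw [List.pairwise_cons] at hs
    by_cases hmem : a ∈ t
    · have h1 : t.erase a ≤ ↑u := by
        have := Multiset.erase_le_erase a ht
        rwa [show ((a :: u : List ℝ) : Multiset ℝ) = a ::ₘ ↑u from rfl,
          Multiset.erase_cons_head] at this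
      have hpos : 0 < Multiset.card t := Multiset.card_pos_iff_exists_mem.mpr ⟨a, hmem⟩
      have hcard : Multiset.card t = Multiset.card (t.erase a) + 1 := by
        rw [Multiset.card_erase_of_mem hmem, Nat.pred_eq_sub_one]
        omega
      have hsum := Multiset.sum_erase hmem
      rw [hcard, List.take_succ_cons, List.sum_cons, ← hsum]
      exact add_le_add_right (ih hs.2 _ h1) a
    · have h1 : t ≤ ↑u := by
        rw [Multiset.le_iff_count]
        intro x
        rcases eq_or_ne x a with rfl | hx
        · simp [Multiset.count_eq_zero_of_notMem hmem]
        · have := Multiset.le_iff_count.mp ht x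
          rwa [show ((a :: u : List ℝ) : Multiset ℝ) = a ::ₘ ↑u from rfl,
            Multiset.count_cons_of_ne hx] at this
      have hlen : Multiset.card t ≤ u.length := by
        have := Multiset.card_le_card h1
        simpa using this
      refine le_trans (ih hs.2 _ h1) ?_
      -- (u.take k).sum ≤ ((a :: u).take k).sum for k ≤ u.length
      rcases Nat.eq_zero_or_pos (Multiset.card t) with h0 | h0
      · simp [h0]
      · obtain ⟨k, hk⟩ : ∃ k, Multiset.card t = k + 1 := ⟨Multiset.card t - 1, by omega⟩
        rw [hk] at hlen ⊢
        rw [List.take_succ_cons, List.sum_cons]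
        have hklen : k < u.length := by omega
        rw [List.sum_take_succ u k hklen]
        have : u[k] ≤ a := hs.1 _ (List.getElem_mem hklen)
        linarith


theorem lex_of_filters {a b : List ℝ} (ha : a.Pairwise (· ≥ ·)) (hb : b.Pairwise (· ≥ ·)) (w : ℝ)
    (hperm : a.filter (fun x => decide (w < x)) ~ b.filter (fun x => decide (w < x)))
    (hcount : a.count w < b.count w) :
    List.Lex (· < ·) a b := by
  haveI : IsAntisymm ℝ (· ≥ ·) := ⟨fun a b h1 h2 => le_antisymm h2 h1⟩
  have hF : a.filter (fun x => decide (w < x)) = b.filter (fun x => decide (w < x)) :=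
    List.Perm.eq_of_pairwise' (r := (· ≥ ·)) (ha.filter _) (hb.filter _) hperm
  have hda := DMAux.sorted_decomp w a ha
  have hdb := DMAux.sorted_decomp w b hb
  have hra : a.filter (fun x => decide (x = w)) = List.replicate (a.count w) w := List.filter_eq (l := a) w
  have hrb : b.filter (fun x => decide (x = w)) = List.replicate (b.count w) w := List.filter_eq (l := b) w
  rw [hda, hdb, hF, hra, hrb]
  rw [List.append_assoc, List.append_assoc]
  apply List.Lex.append_left
  obtain ⟨d, hd⟩ : ∃ d, b.count w = a.count w + (d + 1) := ⟨b.count w - a.count w - 1, by omega⟩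
  rw [hd, List.replicate_add]
  rw [List.append_assoc]
  apply List.Lex.append_left
  rcases h : a.filter (fun x => decide (x < w)) with _ | ⟨x, xs⟩
  · exact List.Lex.nil
  · have hx : x < w := by
      have : x ∈ a.filter (fun x => decide (x < w)) := by rw [h]; exact List.mem_cons_self
      simpa using (List.of_mem_filter this)
    exact List.Lex.rel hx

theorem lex_first_diff {r : ℝ → ℝ → Prop} :
    ∀ {a b : List ℝ}, List.Lex r a b → a.length = b.length →
      ∃ k, ∃ (h1 : k < a.length) (h2 : k < b.length), a.take k = b.take k ∧ r a[k] b[k] := by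
  intro a b h
  induction h with
  | @nil b l => intro hl; simp at hl
  | @cons a l1 l2 h ih =>
    intro hl
    obtain ⟨k, h1, h2, ht, hr⟩ := ih (by simpa using hl)
    exact ⟨k + 1, by simpa using h1, by simpa using h2, by simpa using ht, by simpa using hr⟩
  | @rel a l1 b l2 h =>
    intro hl
    exact ⟨0, by simp, by simp, rfl, by simpa using h⟩

theorem le_getElem_of_mem_drop {l : List ℝ} (hl : l.Pairwise (· ≥ ·)) {k : ℕ} (hk : k < l.length)
    {x : ℝ} (hx : x ∈ l.drop k) : x ≤ l[k] := by
  have hd : l.drop k = l[k] :: l.drop (k + 1) := List.drop_eq_getElem_cons hk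
  have hs : (l.drop k).Pairwise (· ≥ ·) := hl.sublist (List.drop_sublist k l)
  rw [hd] at hs hx
  rw [List.pairwise_cons] at hs
  rcases List.mem_cons.mp hx with rfl | hx'
  · exact le_refl _
  · exact hs.1 x hx'

theorem take_ge_drop {l : List ℝ} (hl : l.Pairwise (· ≥ ·)) (n : ℕ) :
    ∀ x ∈ l.take n, ∀ y ∈ l.drop n, y ≤ x := by
  have h2 : List.Pairwise (· ≥ ·) (l.take n ++ l.drop n) := by
    rw [List.take_append_drop]; exact hl
  rw [List.pairwise_append] at h2
  exact fun x hx y hy => h2.2.2 x hx y hy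

theorem countP_ge {l : List ℝ} (hl : l.Pairwise (· ≥ ·)) {k : ℕ} (hk : k < l.length) :
    k + 1 ≤ l.countP (fun x => decide (l[k] ≤ x)) := by
  set P : ℝ → Bool := fun x => decide (l[k] ≤ x) with hP
  have hlen : (l.take (k + 1)).length = k + 1 := by
    rw [List.length_take]; omega
  have h1 : (l.take (k + 1)).countP P = k + 1 := by
    conv_rhs => rw [← hlen]
    rw [List.countP_eq_length]
    · intro x hx
      have htk : l.take (k + 1) = l.take k ++ [l[k]] := by
        rw [List.take_succ, List.getElem?_eq_getElem hk]
        rfl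
      rw [htk, List.mem_append] at hx
      rcases hx with hx | hx
      · have hdk : l[k] ∈ l.drop k := by
          rw [List.drop_eq_getElem_cons hk]; exact List.mem_cons_self
        have hge := take_ge_drop hl k x hx l[k] hdk
        simp [hP]
        exact hge
      · simp at hx
        simp [hP, hx]
  have h2 : l.countP P = (l.take (k + 1)).countP P + (l.drop (k + 1)).countP P := by
    rw [← List.countP_append, List.take_append_drop]
  omega

theorem sum_take_lt {a b : List ℝ} (ha : a.Pairwise (· ≥ ·)) (hb : b.Pairwise (· ≥ ·))
    {k : ℕ} (hka : k < a.length) (hkb : k < b.length)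
    (htake : a.take k = b.take k) (hlt : a[k] < b[k])
    {j : ℕ} (hj : j = b.countP (fun x => decide (b[k] ≤ x))) (hjb : j ≤ b.length)
    (hja : j ≤ a.length) :
    (a.take j).sum < (b.take j).sum := by
  set v : ℝ := b[k] with hv
  set c : ℝ := a[k] with hc
  have hkj : k + 1 ≤ j := hj ▸ countP_ge hb hkb
  -- lower bound for b
  have hbtake : b.take j = b.takeWhile (fun x => decide (v ≤ x)) := by
    rw [hj, take_countP_eq_filter hb v, filter_le_eq_takeWhile v b hb]
  have hsplitb : (b.take j).sum = (b.take k).sum + ((b.take j).drop k).sum := by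
    have : b.take j = (b.take j).take k ++ (b.take j).drop k := (List.take_append_drop _ _).symm
    rw [List.take_take, min_eq_left (by omega)] at this
    conv_lhs => rw [this]
    rw [List.sum_append]
  have hlenbj : (b.take j).length = j := by rw [List.length_take]; omega
  have hlenb : ((b.take j).drop k).length = j - k := by
    rw [List.length_drop, hlenbj]
  have hlb : ((j - k : ℕ) : ℝ) * v ≤ ((b.take j).drop k).sum := by
    rw [← hlenb]
    apply card_mul_le_sum
    intro x hx
    have hx2 : x ∈ b.take j := List.mem_of_mem_drop hx
    rw [hbtake] at hx2
    have := List.mem_takeWhile_imp hx2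
    simpa using this
  -- upper bound for a
  have hsplita : (a.take j).sum = (a.take k).sum + ((a.take j).drop k).sum := by
    have : a.take j = (a.take j).take k ++ (a.take j).drop k := (List.take_append_drop _ _).symm
    rw [List.take_take, min_eq_left (by omega)] at this
    conv_lhs => rw [this]
    rw [List.sum_append]
  have hlena : ((a.take j).drop k).length = j - k := by
    rw [List.length_drop, List.length_take]; omega
  have hua : ((a.take j).drop k).sum ≤ ((j - k : ℕ) : ℝ) * c := by
    rw [← hlena]
    apply sum_le_card_mul
    intro x hx
    rw [List.drop_take] at hx
    have hx2 : x ∈ a.drop k := List.mem_of_mem_take hx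
    exact le_getElem_of_mem_drop ha hka hx2
  have hcv : ((j - k : ℕ) : ℝ) * c < ((j - k : ℕ) : ℝ) * v := by
    apply mul_lt_mul_of_pos_left hlt
    have : 1 ≤ j - k := by omega
    exact_mod_cast Nat.lt_of_lt_of_le Nat.zero_lt_one this
  rw [hsplita, hsplitb, htake]
  linarith


theorem coe_sortDescR (x : α → ℝ) : ((sortDescR x : List ℝ) : Multiset ℝ) = Finset.univ.val.map x := by
  unfold sortDescR
  rw [Multiset.coe_reverse, Multiset.sort_eq]

theorem sorted_sortDescR (x : α → ℝ) : (sortDescR x).Pairwise (· ≥ ·) := by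
  unfold sortDescR
  rw [List.pairwise_reverse]
  have h := Multiset.pairwise_sort (α := ℝ) (Finset.univ.val.map x) (· ≤ ·)
  exact List.Pairwise.imp (fun {a b} (hab : a ≤ b) => hab) h

theorem length_sortDescR (x : α → ℝ) : (sortDescR x).length = Fintype.card α := by
  have := congrArg Multiset.card (coe_sortDescR x)
  simpa using this

theorem sum_finset_le_sum_take (x : α → ℝ) (Z : Finset α) :
    ∑ s ∈ Z, x s ≤ ((sortDescR x).take Z.card).sum := by
  have ht : (Z.val.map x) ≤ ((sortDescR x : List ℝ) : Multiset ℝ) := by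
    rw [coe_sortDescR]
    exact Multiset.map_le_map (Finset.val_le_iff.mpr (Finset.subset_univ Z))
  have h := sum_le_sum_take (sortDescR x) (sorted_sortDescR x) _ ht
  rw [Multiset.card_map] at h
  rw [Finset.sum_eq_multiset_sum]
  exact h

theorem card_level_eq_countP (m : α → ℝ) (v : ℝ) :
    (Finset.univ.filter (fun s => v ≤ m s)).card
      = (sortDescR m).countP (fun x => decide (v ≤ x)) := by
  rw [← Multiset.coe_countP (fun x => v ≤ x), coe_sortDescR, Multiset.countP_map]
  rw [Finset.card_def, Finset.filter_val]

theorem sum_take_level (m : α → ℝ) (v : ℝ) :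
    ((sortDescR m).take ((Finset.univ.filter (fun s => v ≤ m s)).card)).sum
      = ∑ s ∈ Finset.univ.filter (fun s => v ≤ m s), m s := by
  rw [card_level_eq_countP m v, take_countP_eq_filter (sorted_sortDescR m) v]
  have h1 : (((sortDescR m).filter (fun x => decide (v ≤ x)) : List ℝ) : Multiset ℝ)
      = (Finset.univ.filter (fun s => v ≤ m s)).val.map m := by
    rw [← Multiset.filter_coe (fun x => v ≤ x), coe_sortDescR, Multiset.filter_map,
      Finset.filter_val]
    rfl
  have h2 := congrArg Multiset.sum h1
  rw [Multiset.sum_coe] at h2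
  rw [h2, Finset.sum_eq_multiset_sum]

/-! ### Auxiliary lemmas about the base polyhedron -/

theorem lexLE_of_not_lex {u v : List ℝ} (h : ¬ List.Lex (· < ·) v u) : lexLE u v := by
  haveI : IsTrichotomous ℝ (· < ·) := inferInstance
  rcases trichotomous_of (List.Lex (· < ·)) u v with h1 | h1 | h1
  · exact Or.inr h1
  · exact Or.inl h1
  · exact absurd h1 h

theorem lex_asymm {u v : List ℝ} (h1 : List.Lex (· < ·) u v) (h2 : List.Lex (· < ·) v u) :
    False := by
  haveI : IsAsymm ℝ (· < ·) := inferInstance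
  exact _root_.asymm (r := List.Lex (· < ·)) h1 h2

theorem not_lex_of_tight (p : Finset α → EReal) (m : α → ℝ)
    (ℓ : ℕ) (lam : ℕ → ℝ)
    (hvals : ∀ s : α, ∃ i, 1 ≤ i ∧ i ≤ ℓ ∧ m s = lam i)
    (htight : ∀ i, 1 ≤ i → i ≤ ℓ →
      ((∑ s ∈ Finset.univ.filter (fun s => lam i ≤ m s), m s : ℝ) : EReal) =
        p (Finset.univ.filter (fun s => lam i ≤ m s)))
    (y : α → ℝ) (hy : memB p y) :
    ¬ List.Lex (· < ·) (sortDescR y) (sortDescR m) := by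
  intro hlex
  have hlen : (sortDescR y).length = (sortDescR m).length := by
    rw [length_sortDescR, length_sortDescR]
  obtain ⟨k, hka, hkb, htake, hlt⟩ := lex_first_diff hlex hlen
  have hvmem : (sortDescR m)[k] ∈ ((sortDescR m : List ℝ) : Multiset ℝ) := by
    exact_mod_cast List.getElem_mem hkb
  rw [coe_sortDescR] at hvmem
  obtain ⟨s0, -, hs0⟩ := Multiset.mem_map.mp hvmem
  obtain ⟨i, hi1, hiℓ, hmi⟩ := hvals s0
  have hveq : (sortDescR m)[k] = lam i := by rw [← hs0, hmi]
  set C : Finset α := Finset.univ.filter (fun s => lam i ≤ m s) with hC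
  have hj : C.card = (sortDescR m).countP (fun x => decide ((sortDescR m)[k] ≤ x)) := by
    simp only [hveq, hC]
    exact card_level_eq_countP m (lam i)
  have hjb : C.card ≤ (sortDescR m).length := hj ▸ List.countP_le_length
  have hja : C.card ≤ (sortDescR y).length := by rw [hlen]; exact hjb
  have hstrict := sum_take_lt (sorted_sortDescR y) (sorted_sortDescR m) hka hkb htake hlt hj
    hjb hja
  have h1 : (∑ s ∈ C, m s) ≤ ∑ s ∈ C, y s := by
    have ht := htight i hi1 hiℓ
    have hy2 := hy.2 C
    rw [hC] at hy2
    rw [← ht] at hy2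
    exact EReal.coe_le_coe_iff.mp hy2
  have h2 : ∑ s ∈ C, y s ≤ ((sortDescR y).take C.card).sum := sum_finset_le_sum_take y C
  have h3 : ((sortDescR m).take C.card).sum = ∑ s ∈ C, m s := by
    rw [hC]; exact sum_take_level m (lam i)
  linarith

theorem perturb (p : Finset α → EReal) (m : α → ℝ) (hm : memB p m)
    (hDM : ∀ y : α → ℝ, memB p y → lexLE (sortDescR m) (sortDescR y))
    (s t : α) (hst : m t < m s)
    (hns : ∀ Z : Finset α, s ∈ Z → t ∉ Z → p Z ≠ ((∑ x ∈ Z, m x : ℝ) : EReal)) : False := by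
  classical
  have hstne : s ≠ t := by rintro rfl; exact lt_irrefl _ hst
  have htsne : t ≠ s := fun h => hstne h.symm
  set w := m s with hw
  set slack : Finset α → ℝ := fun Z => ∑ x ∈ Z, m x - (p Z).toReal with hslack
  set Zs : Finset (Finset α) :=
    Finset.univ.filter (fun Z => s ∈ Z ∧ t ∉ Z ∧ p Z ≠ ⊥) with hZs
  set E : Finset ℝ := insert ((m s - m t) / 2) (Zs.image slack) with hE
  have hEne : E.Nonempty := ⟨_, Finset.mem_insert_self _ _⟩
  set ε := E.min' hEne with hε
  have hpne_top : ∀ Z : Finset α, p Z ≠ ⊤ := by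
    intro Z h
    have h2 := hm.2 Z
    rw [h] at h2
    exact absurd (lt_of_le_of_lt h2 (EReal.coe_lt_top _)) (lt_irrefl _)
  have hslack_pos : ∀ Z ∈ Zs, 0 < slack Z := by
    intro Z hZ
    rw [hZs, Finset.mem_filter] at hZ
    obtain ⟨-, hsZ, htZ, hbot⟩ := hZ
    have h1 : p Z ≤ ((∑ x ∈ Z, m x : ℝ) : EReal) := hm.2 Z
    have h2 := hns Z hsZ htZ
    have h3 : p Z = (((p Z).toReal : ℝ) : EReal) := (EReal.coe_toReal (hpne_top Z) hbot).symm
    rw [h3] at h1 h2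
    have h4 : (p Z).toReal ≤ ∑ x ∈ Z, m x := EReal.coe_le_coe_iff.mp h1
    have h5 : (p Z).toReal ≠ ∑ x ∈ Z, m x := fun h => h2 (by rw [h])
    have h6 : (p Z).toReal < ∑ x ∈ Z, m x := lt_of_le_of_ne h4 h5
    simp only [hslack]
    linarith
  have hallpos : ∀ e ∈ E, 0 < e := by
    intro e he
    rw [hE, Finset.mem_insert] at he
    rcases he with h | h
    · rw [h]; linarith
    · obtain ⟨Z, hZ, rfl⟩ := Finset.mem_image.mp h
      exact hslack_pos Z hZ
  have hεpos : 0 < ε := hallpos _ (E.min'_mem hEne)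
  have hε1 : ε ≤ (m s - m t) / 2 := Finset.min'_le _ _ (Finset.mem_insert_self _ _)
  have hε2 : ∀ Z ∈ Zs, ε ≤ slack Z := fun Z hZ =>
    Finset.min'_le _ _ (Finset.mem_insert_of_mem (Finset.mem_image_of_mem _ hZ))
  set y : α → ℝ := fun x => if x = s then m s - ε else if x = t then m t + ε else m x with hy
  have hys : y s = m s - ε := by simp [hy]
  have hyt : y t = m t + ε := by simp [hy, htsne]
  have hyo : ∀ x, x ≠ s → x ≠ t → y x = m x := by
    intro x h1 h2; simp [hy, h1, h2]
  have hsumZ : ∀ Z : Finset α,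
      ∑ x ∈ Z, y x = ∑ x ∈ Z, m x + ((if s ∈ Z then -ε else 0) + (if t ∈ Z then ε else 0)) := by
    intro Z
    have hpt : ∀ x, y x = m x + ((if x = s then -ε else 0) + (if x = t then ε else 0)) := by
      intro x
      by_cases h1 : x = s
      · subst h1; rw [hys, if_pos rfl, if_neg hstne]; ring
      · by_cases h2 : x = t
        · subst h2; rw [hyt, if_neg h1, if_pos rfl]; ring
        · rw [hyo x h1 h2, if_neg h1, if_neg h2]; ring
    rw [Finset.sum_congr rfl (fun x _ => hpt x), Finset.sum_add_distrib,
      Finset.sum_add_distrib, Finset.sum_ite_eq' Z s (fun _ => -ε),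
      Finset.sum_ite_eq' Z t (fun _ => ε)]
  have hymem : memB p y := by
    constructor
    · have h1 : ∑ x, y x = ∑ x, m x := by
        rw [hsumZ Finset.univ, if_pos (Finset.mem_univ s), if_pos (Finset.mem_univ t)]
        ring
      rw [h1]; exact hm.1
    · intro Z
      rw [hsumZ Z]
      by_cases hsZ : s ∈ Z
      · by_cases htZ : t ∈ Z
        · rw [if_pos hsZ, if_pos htZ]
          have heq : ∑ x ∈ Z, m x + (-ε + ε) = ∑ x ∈ Z, m x := by ring
          rw [heq]; exact hm.2 Z
        · rw [if_pos hsZ, if_neg htZ, add_zero]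
          by_cases hbot : p Z = ⊥
          · rw [hbot]; exact bot_le
          · have hZs' : Z ∈ Zs := by
              rw [hZs, Finset.mem_filter]
              exact ⟨Finset.mem_univ _, hsZ, htZ, hbot⟩
            have h3 : p Z = (((p Z).toReal : ℝ) : EReal) :=
              (EReal.coe_toReal (hpne_top Z) hbot).symm
            rw [h3, EReal.coe_le_coe_iff]
            have h4 := hε2 Z hZs'
            simp only [hslack] at h4
            linarith
      · rw [if_neg hsZ, zero_add]
        refine le_trans (hm.2 Z) ?_
        rw [EReal.coe_le_coe_iff]
        by_cases htZ : t ∈ Z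
        · rw [if_pos htZ]; linarith
        · rw [if_neg htZ]; linarith
  have hεlt : ε < w - m t := by
    rw [hw]; linarith
  have key : Multiset.filter (fun x => w < x) (Finset.univ.val.map y) =
      Multiset.filter (fun x => w < x) (Finset.univ.val.map m) := by
    rw [Multiset.filter_map, Multiset.filter_map]
    have hsets : Multiset.filter ((fun x => w < x) ∘ y) Finset.univ.val =
        Multiset.filter ((fun x => w < x) ∘ m) Finset.univ.val := by
      apply Multiset.filter_congr
      intro x hx
      simp only [Function.comp_apply]
      by_cases h1 : x = s
      · subst h1
        rw [hys]
        constructor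
        · intro h; exfalso; rw [hw] at h; linarith
        · intro h; exfalso; rw [hw] at h; exact lt_irrefl _ h
      · by_cases h2 : x = t
        · subst h2
          rw [hyt]
          constructor
          · intro h; exfalso; linarith
          · intro h; exfalso; linarith
        · rw [hyo x h1 h2]
    rw [hsets]
    apply Multiset.map_congr rfl
    intro x hx
    rw [Multiset.mem_filter] at hx
    have hwx : w < m x := hx.2
    have h1 : x ≠ s := by rintro rfl; rw [hw] at hwx; exact lt_irrefl _ hwx
    have h2 : x ≠ t := by rintro rfl; linarith
    exact hyo x h1 h2
  have hfilter : (sortDescR y).filter (fun x => decide (w < x)) ~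
      (sortDescR m).filter (fun x => decide (w < x)) := by
    rw [← Multiset.coe_eq_coe]
    have e1 := Multiset.filter_coe (p := fun x : ℝ => w < x) (sortDescR y)
    have e2 := Multiset.filter_coe (p := fun x : ℝ => w < x) (sortDescR m)
    rw [← e1, ← e2, coe_sortDescR, coe_sortDescR]
    exact key
  have hcount : (sortDescR y).count w < (sortDescR m).count w := by
    rw [← Multiset.coe_count, ← Multiset.coe_count, coe_sortDescR, coe_sortDescR,
      Multiset.count_map, Multiset.count_map]
    have hsub : Multiset.filter (fun a => w = y a) Finset.univ.val ≤
        Multiset.filter (fun a => w = m a) Finset.univ.val := by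
      rw [Multiset.le_filter]
      constructor
      · exact Multiset.filter_le _ _
      · intro x hx
        rw [Multiset.mem_filter] at hx
        have h1 : x ≠ s := by
          rintro rfl
          rw [hys] at hx
          have := hx.2
          rw [hw] at this
          linarith
        have h2 : x ≠ t := by
          rintro rfl
          rw [hyt] at hx
          have := hx.2
          linarith
        rw [← hyo x h1 h2]
        exact hx.2
    have hslt : Multiset.filter (fun a => w = y a) Finset.univ.val <
        Multiset.filter (fun a => w = m a) Finset.univ.val := by
      refine lt_of_le_of_ne hsub ?_
      intro habs
      have hsm : s ∈ Multiset.filter (fun a => w = m a) Finset.univ.val := by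
        rw [Multiset.mem_filter]
        exact ⟨Finset.mem_univ s, hw⟩
      rw [← habs, Multiset.mem_filter] at hsm
      have := hsm.2
      rw [hys] at this
      rw [hw] at this
      linarith
    exact Multiset.card_lt_card hslt
  have hlex : List.Lex (· < ·) (sortDescR y) (sortDescR m) :=
    lex_of_filters (sorted_sortDescR y) (sorted_sortDescR m) w hfilter hcount
  rcases hDM y hymem with heq | hlex2
  · rw [heq] at hlex
    haveI : IsAsymm ℝ (· < ·) := inferInstance
    exact _root_.asymm (r := List.Lex (· < ·)) hlex hlex
  · exact lex_asymm hlex2 hlex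

/-- `Z` is `m`-tight for `p`. -/
def Tight (p : Finset α → EReal) (m : α → ℝ) (Z : Finset α) : Prop :=
  p Z = ((∑ x ∈ Z, m x : ℝ) : EReal)

theorem tight_inter_union {p : Finset α → EReal} {m : α → ℝ} (hsup : Supermodular p)
    (hm : memB p m) {X Y : Finset α} (hX : Tight p m X) (hY : Tight p m Y) :
    Tight p m (X ∩ Y) ∧ Tight p m (X ∪ Y) := by
  have ha : p (X ∩ Y) ≤ ((∑ x ∈ X ∩ Y, m x : ℝ) : EReal) := hm.2 _
  have hb : p (X ∪ Y) ≤ ((∑ x ∈ X ∪ Y, m x : ℝ) : EReal) := hm.2 _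
  have hkey : ((∑ x ∈ X ∩ Y, m x : ℝ) : EReal) + ((∑ x ∈ X ∪ Y, m x : ℝ) : EReal) ≤
      p (X ∩ Y) + p (X ∪ Y) := by
    have h1 := hsup X Y
    rw [Tight] at hX hY
    rw [hX, hY] at h1
    refine le_trans (le_of_eq ?_) h1
    rw [← EReal.coe_add, ← EReal.coe_add]
    have := Finset.sum_union_inter (s₁ := X) (s₂ := Y) (f := m)
    norm_cast
    linarith
  constructor
  · by_contra hne
    have hlt : p (X ∩ Y) < ((∑ x ∈ X ∩ Y, m x : ℝ) : EReal) := lt_of_le_of_ne ha hne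
    have hc1 : p (X ∩ Y) + p (X ∪ Y) ≤ p (X ∩ Y) + ((∑ x ∈ X ∪ Y, m x : ℝ) : EReal) :=
      add_le_add le_rfl hb
    have hc2 : p (X ∩ Y) + ((∑ x ∈ X ∪ Y, m x : ℝ) : EReal) <
        ((∑ x ∈ X ∩ Y, m x : ℝ) : EReal) + ((∑ x ∈ X ∪ Y, m x : ℝ) : EReal) :=
      EReal.add_lt_add_right_coe hlt _
    exact absurd (lt_of_le_of_lt (le_trans hkey hc1) hc2) (lt_irrefl _)
  · by_contra hne
    have hlt : p (X ∪ Y) < ((∑ x ∈ X ∪ Y, m x : ℝ) : EReal) := lt_of_le_of_ne hb hne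
    have hc1 : p (X ∩ Y) + p (X ∪ Y) ≤ ((∑ x ∈ X ∩ Y, m x : ℝ) : EReal) + p (X ∪ Y) :=
      add_le_add ha le_rfl
    have hc2 : ((∑ x ∈ X ∩ Y, m x : ℝ) : EReal) + p (X ∪ Y) <
        ((∑ x ∈ X ∩ Y, m x : ℝ) : EReal) + ((∑ x ∈ X ∪ Y, m x : ℝ) : EReal) :=
      EReal.add_lt_add_left_coe hlt _
    exact absurd (lt_of_le_of_lt (le_trans hkey hc1) hc2) (lt_irrefl _)

theorem tight_univ {p : Finset α → EReal} {m : α → ℝ} (hm : memB p m) :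
    Tight p m Finset.univ := hm.1.symm

theorem tight_empty {p : Finset α → EReal} {m : α → ℝ} (hp0 : p ∅ = 0) : Tight p m ∅ := by
  rw [Tight, hp0, Finset.sum_empty]
  norm_cast

theorem tight_inf {p : Finset α → EReal} {m : α → ℝ} (hsup : Supermodular p) (hm : memB p m)
    (F : Finset (Finset α)) (h : ∀ Z ∈ F, Tight p m Z) : Tight p m (F.inf id) := by
  classical
  induction F using Finset.induction_on with
  | empty =>
    rw [Finset.inf_empty]
    exact tight_univ hm
  | insert Z F' hx ih =>
    rw [Finset.inf_insert]
    have h1 : Tight p m Z := h Z (Finset.mem_insert_self _ _)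
    have h2 : Tight p m (F'.inf id) := ih (fun W hW => h W (Finset.mem_insert_of_mem hW))
    have : (id Z ⊓ F'.inf id : Finset α) = Z ∩ F'.inf id := rfl
    rw [this]
    exact (tight_inter_union hsup hm h1 h2).1

theorem tight_sup {p : Finset α → EReal} {m : α → ℝ} (hsup : Supermodular p) (hm : memB p m)
    (hp0 : p ∅ = 0) (G : Finset α) (f : α → Finset α) (h : ∀ u ∈ G, Tight p m (f u)) :
    Tight p m (G.sup f) := by
  classical
  induction G using Finset.induction_on with
  | empty =>
    rw [Finset.sup_empty]
    exact tight_empty hp0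
  | insert u G' hx ih =>
    rw [Finset.sup_insert]
    have h1 : Tight p m (f u) := h u (Finset.mem_insert_self _ _)
    have h2 : Tight p m (G'.sup f) := ih (fun w hw => h w (Finset.mem_insert_of_mem hw))
    have : (f u ⊔ G'.sup f : Finset α) = f u ∪ G'.sup f := rfl
    rw [this]
    exact (tight_inter_union hsup hm h1 h2).2

theorem tight_of_decmin (p : Finset α → EReal) (hp0 : p ∅ = 0) (hsup : Supermodular p)
    (m : α → ℝ) (hm : memB p m)
    (hDM : ∀ y : α → ℝ, memB p y → lexLE (sortDescR m) (sortDescR y))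
    (C : Finset α) (hC : ∀ u ∈ C, ∀ x, m u ≤ m x → x ∈ C) :
    Tight p m C := by
  classical
  set T : α → Finset α :=
    fun u => (Finset.univ.filter (fun Z => u ∈ Z ∧ Tight p m Z)).inf id with hT
  have hTtight : ∀ u, Tight p m (T u) := by
    intro u
    apply tight_inf hsup hm
    intro Z hZ
    exact (Finset.mem_filter.mp hZ).2.2
  have hTmem : ∀ u, u ∈ T u := by
    intro u
    rw [hT]
    rw [Finset.mem_inf]
    intro Z hZ
    exact (Finset.mem_filter.mp hZ).2.1
  have hTge : ∀ u, ∀ x ∈ T u, m u ≤ m x := by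
    intro u x hx
    by_contra hlt
    push_neg at hlt
    apply perturb p m hm hDM u x hlt
    intro Z huZ hxZ habs
    have hZmem : Z ∈ Finset.univ.filter (fun Z => u ∈ Z ∧ Tight p m Z) :=
      Finset.mem_filter.mpr ⟨Finset.mem_univ _, huZ, habs⟩
    have hsub : T u ⊆ Z := Finset.le_iff_subset.mp (Finset.inf_le hZmem)
    exact hxZ (hsub hx)
  have hUnion : C = C.sup T := by
    ext x
    rw [Finset.mem_sup]
    constructor
    · intro hx; exact ⟨x, hx, hTmem x⟩
    · rintro ⟨u, hu, hx⟩; exact hC u hu x (hTge u x hx)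
  rw [hUnion]
  exact tight_sup hsup hm hp0 C T (fun u _ => hTtight u)

theorem lam_mono (ℓ : ℕ) (lam : ℕ → ℝ)
    (hdec : ∀ i, 1 ≤ i → i < ℓ → lam (i + 1) < lam i) :
    ∀ a, 1 ≤ a → ∀ b, a ≤ b → b ≤ ℓ → lam b ≤ lam a := by
  intro a ha b
  induction b with
  | zero => intro hab _; exact absurd hab (by omega)
  | succ n ih =>
    intro hab hb
    rcases Nat.lt_or_ge a (n + 1) with h | h
    · have h2 : lam n ≤ lam a := ih (by omega) (by omega)
      have h3 : lam (n + 1) < lam n := hdec n (by omega) (by omega)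
      linarith
    · have : a = n + 1 := by omega
      rw [this]

theorem lam_strict (ℓ : ℕ) (lam : ℕ → ℝ)
    (hdec : ∀ i, 1 ≤ i → i < ℓ → lam (i + 1) < lam i) :
    ∀ a b, 1 ≤ a → a < b → b ≤ ℓ → lam b < lam a := by
  intro a b ha hab hb
  have h1 : lam b ≤ lam (a + 1) := lam_mono ℓ lam hdec (a + 1) (by omega) b (by omega) hb
  have h2 : lam (a + 1) < lam a := hdec a ha (by omega)
  linarith

theorem eq_of_same_sort (p : Finset α → EReal) (m m' : α → ℝ)
    (hm' : memB p m') (hsort : sortDescR m' = sortDescR m)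
    (ℓ : ℕ) (hℓ : 1 ≤ ℓ) (lam : ℕ → ℝ)
    (hdec : ∀ i, 1 ≤ i → i < ℓ → lam (i + 1) < lam i)
    (hvals : ∀ s : α, ∃ i, 1 ≤ i ∧ i ≤ ℓ ∧ m s = lam i)
    (htight : ∀ i, 1 ≤ i → i ≤ ℓ →
      ((∑ s ∈ Finset.univ.filter (fun s => lam i ≤ m s), m s : ℝ) : EReal) =
        p (Finset.univ.filter (fun s => lam i ≤ m s))) :
    m' = m := by
  classical
  have hmult : Finset.univ.val.map m' = Finset.univ.val.map m := by
    rw [← coe_sortDescR (x := m'), ← coe_sortDescR (x := m), hsort]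
  have hmono := lam_mono ℓ lam hdec
  have hstrict := lam_strict ℓ lam hdec
  set C : ℕ → Finset α := fun i => Finset.univ.filter (fun s => lam i ≤ m s) with hCdef
  have hcard : ∀ r : ℝ, (Finset.univ.filter (fun s => r < m' s)).card =
      (Finset.univ.filter (fun s => r < m s)).card := by
    intro r
    have h1 : Multiset.countP (fun x => r < x) (Finset.univ.val.map m') =
        Multiset.countP (fun x => r < x) (Finset.univ.val.map m) := by rw [hmult]
    rw [Multiset.countP_map, Multiset.countP_map] at h1
    rw [Finset.card_def, Finset.card_def, Finset.filter_val, Finset.filter_val]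
    exact h1
  have hsums : ∀ i, 1 ≤ i → i ≤ ℓ → ∑ s ∈ C i, m' s = ∑ s ∈ C i, m s := by
    intro i h1 h2
    have hge : ∑ s ∈ C i, m s ≤ ∑ s ∈ C i, m' s := by
      have ht := htight i h1 h2
      have h3 := hm'.2 (Finset.univ.filter (fun s => lam i ≤ m s))
      rw [← ht] at h3
      exact EReal.coe_le_coe_iff.mp h3
    have hle : ∑ s ∈ C i, m' s ≤ ((sortDescR m').take ((C i).card)).sum :=
      sum_finset_le_sum_take m' (C i)
    rw [hsort] at hle
    have heq : ((sortDescR m).take ((C i).card)).sum = ∑ s ∈ C i, m s :=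
      sum_take_level m (lam i)
    linarith
  have hvalC : ∀ i, 1 ≤ i → i ≤ ℓ → ∀ s ∈ C i, (i = 1 ∨ s ∉ C (i - 1)) → m s = lam i := by
    intro i h1 h2 s hs hcase
    obtain ⟨j, hj1, hj2, hj3⟩ := hvals s
    have hsC : lam i ≤ m s := (Finset.mem_filter.mp hs).2
    rcases lt_trichotomy j i with h | h | h
    · exfalso
      rcases hcase with rfl | hnot
      · omega
      · apply hnot
        rw [Finset.mem_filter]
        refine ⟨Finset.mem_univ _, ?_⟩
        rw [hj3]
        exact hmono j hj1 (i - 1) (by omega) (by omega)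
    · rw [hj3, h]
    · exfalso
      have := hstrict i j h1 h hj2
      rw [hj3] at hsC
      linarith
  have main : ∀ i, 1 ≤ i → i ≤ ℓ → ∀ s ∈ C i, m' s = m s := by
    intro i
    induction i with
    | zero => intro h; exact absurd h (by omega)
    | succ n ih =>
      intro h1 hn1
      rcases Nat.eq_zero_or_pos n with rfl | hn
      · have hub : ∀ s : α, m' s ≤ lam 1 := by
          have hGm : Finset.univ.filter (fun s => lam 1 < m s) = ∅ := by
            rw [Finset.filter_eq_empty_iff]
            intro s _
            obtain ⟨j, hj1, hj2, hj3⟩ := hvals s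
            rw [hj3]
            exact not_lt.mpr (hmono 1 le_rfl j hj1 hj2)
          have h2 := hcard (lam 1)
          rw [hGm, Finset.card_empty, Finset.card_eq_zero, Finset.filter_eq_empty_iff] at h2
          intro s
          exact not_lt.mp (h2 (Finset.mem_univ s))
        have hpt : ∀ s ∈ C 1, m' s ≤ m s := by
          intro s hs
          have hv := hvalC 1 le_rfl hn1 s hs (Or.inl rfl)
          rw [hv]
          exact hub s
        exact (Finset.sum_eq_sum_iff_of_le hpt).mp (hsums 1 le_rfl hn1)
      · have hCn1 : C n ⊆ C (n + 1) := by
          intro s hs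
          rw [hCdef] at hs ⊢
          rw [Finset.mem_filter] at hs ⊢
          refine ⟨Finset.mem_univ _, ?_⟩
          have : lam (n + 1) < lam n := hdec n hn (by omega)
          linarith [hs.2]
        have ihn : ∀ s ∈ C n, m' s = m s := ih hn (by omega)
        have hGm : Finset.univ.filter (fun s => lam (n + 1) < m s) = C n := by
          ext s
          rw [Finset.mem_filter, hCdef, Finset.mem_filter]
          constructor
          · rintro ⟨-, hlt⟩
            refine ⟨Finset.mem_univ _, ?_⟩
            obtain ⟨j, hj1, hj2, hj3⟩ := hvals s
            rw [hj3] at hlt ⊢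
            have hj : j ≤ n := by
              by_contra habs
              push_neg at habs
              have := hmono (n + 1) (by omega) j habs hj2
              linarith
            exact hmono j hj1 n hj (by omega)
          · rintro ⟨-, hge⟩
            refine ⟨Finset.mem_univ _, ?_⟩
            have : lam (n + 1) < lam n := hdec n hn (by omega)
            linarith
        have hsubG : C n ⊆ Finset.univ.filter (fun s => lam (n + 1) < m' s) := by
          intro s hs
          rw [Finset.mem_filter]
          refine ⟨Finset.mem_univ _, ?_⟩
          rw [ihn s hs]
          rw [hCdef, Finset.mem_filter] at hs
          have : lam (n + 1) < lam n := hdec n hn (by omega)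
          linarith [hs.2]
        have hcards : (Finset.univ.filter (fun s => lam (n + 1) < m' s)).card = (C n).card := by
          rw [hcard (lam (n + 1)), hGm]
        have hGeq : C n = Finset.univ.filter (fun s => lam (n + 1) < m' s) :=
          Finset.eq_of_subset_of_card_le hsubG (le_of_eq hcards)
        have hub : ∀ s ∈ C (n + 1) \ C n, m' s ≤ m s := by
          intro s hs
          rw [Finset.mem_sdiff] at hs
          have hnotG : s ∉ Finset.univ.filter (fun s => lam (n + 1) < m' s) := by
            rw [← hGeq]; exact hs.2
          rw [Finset.mem_filter] at hnotG
          push_neg at hnotG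
          have h4 : m' s ≤ lam (n + 1) := hnotG (Finset.mem_univ s)
          have h5 : m s = lam (n + 1) := hvalC (n + 1) (by omega) hn1 s hs.1 (Or.inr hs.2)
          rw [h5]
          exact h4
        have hsd : ∑ s ∈ C (n + 1) \ C n, m' s = ∑ s ∈ C (n + 1) \ C n, m s := by
          have e1 := Finset.sum_sdiff (f := m') hCn1
          have e2 := Finset.sum_sdiff (f := m) hCn1
          have e3 : ∑ s ∈ C n, m' s = ∑ s ∈ C n, m s := Finset.sum_congr rfl ihn
          have e4 := hsums (n + 1) (by omega) hn1
          linarith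
        have hD := (Finset.sum_eq_sum_iff_of_le hub).mp hsd
        intro s hs
        by_cases hsn : s ∈ C n
        · exact ihn s hsn
        · exact hD s (Finset.mem_sdiff.mpr ⟨hs, hsn⟩)
  funext s
  obtain ⟨j, hj1, hj2, hj3⟩ := hvals s
  apply main ℓ hℓ le_rfl
  rw [hCdef, Finset.mem_filter]
  refine ⟨Finset.mem_univ _, ?_⟩
  rw [hj3]
  exact hmono j hj1 ℓ hj2 le_rfl

end DMAux

/-- An element `m ∈ B'(p)` with distinct component values `λ'₁ > ⋯ > λ'_ℓ` is the
unique dec-min element of `B` iff each level set `Ĉ_i = {s : m(s) ≥ λ'_i}` is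
`m`-tight. -/
theorem decmin_iff_level_sets_tight (p : Finset α → EReal) (hp0 : p ∅ = 0)
    (hfin : p (Finset.univ : Finset α) ≠ ⊥) (hsup : Supermodular p)
    (m : α → ℝ) (hm : memB p m) (ℓ : ℕ) (hℓ : 1 ≤ ℓ) (lam : ℕ → ℝ)
    (hdec : ∀ i, 1 ≤ i → i < ℓ → lam (i + 1) < lam i)
    (hvals : ∀ s : α, ∃ i, 1 ≤ i ∧ i ≤ ℓ ∧ m s = lam i)
    (hattain : ∀ i, 1 ≤ i → i ≤ ℓ → ∃ s : α, m s = lam i) :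
    (DecMinR p m ∧ ∀ m' : α → ℝ, DecMinR p m' → m' = m) ↔
      (∀ i, 1 ≤ i → i ≤ ℓ →
        ((∑ s ∈ Finset.univ.filter (fun s => lam i ≤ m s), m s : ℝ) : EReal) =
          p (Finset.univ.filter (fun s => lam i ≤ m s))) := by
  classical
  constructor
  · rintro ⟨⟨-, hDM⟩, -⟩ i hi1 hiℓ
    refine Eq.symm (DMAux.tight_of_decmin p hp0 hsup m hm hDM _ ?_)
    intro u hu x hx
    rw [Finset.mem_filter] at hu ⊢
    exact ⟨Finset.mem_univ _, le_trans hu.2 hx⟩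
  · intro htight
    have hDM : ∀ y : α → ℝ, memB p y → lexLE (sortDescR m) (sortDescR y) := by
      intro y hy
      exact DMAux.lexLE_of_not_lex (DMAux.not_lex_of_tight p m ℓ lam hvals htight y hy)
    refine ⟨⟨hm, hDM⟩, ?_⟩
    intro m' hm'
    have h1 := hDM m' hm'.1
    have h2 := hm'.2 m hm
    have hsort : sortDescR m' = sortDescR m := by
      rcases h1 with he | hl1
      · exact he.symm
      · rcases h2 with he | hl2
        · exact he
        · exact (DMAux.lex_asymm hl1 hl2).elim
    exact DMAux.eq_of_same_sort p m m' hm'.1 hsort ℓ hℓ lam hdec hvals htight
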